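/- Fix reals c, q, L > 0, D > 0 and Q₂ ∈ ℝ. Then the set B₂ is an open subset of ℝ². -/

import Mathlib

open Real

noncomputable section

/-- the ellipse norm `‖(u₁,u₂)‖_@ = √(u₁² + c u₂²)`. -/
def nAt (c : ℝ) (u : ℝ × ℝ) : ℝ := Real.sqrt (u.1 ^ 2 + c * u.2 ^ 2)

/-- `Θ_x = √(x² + c q²)`. -/
def thetaAt (c q x : ℝ) : ℝ := Real.sqrt (x ^ 2 + c * q ^ 2)

/-- the set `B₂`. -/
def B2 (c q L D Q2 : ℝ) : Set (ℝ × ℝ) :=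
  {p | ∀ s i : ℤ, i ≠ 0 →
    D * q * |p.2| / thetaAt c q p.1 <
      nAt c
        (((s : ℝ) * q + (i : ℝ) * Q2) * p.1 * p.2 / (thetaAt c q p.1) ^ 2 -
            (i : ℝ) * L,
          ((s : ℝ) * q + (i : ℝ) * Q2) * q * p.2 / (thetaAt c q p.1) ^ 2)}


lemma nAt_cont (c : ℝ) : Continuous (nAt c) := by unfold nAt; fun_prop
lemma theta_cont (c q : ℝ) : Continuous (thetaAt c q) := by unfold thetaAt; fun_prop
lemma theta_pos {c q : ℝ} (hc : 0 < c) (hq : 0 < q) (x : ℝ) : 0 < thetaAt c q x :=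
  Real.sqrt_pos.mpr (by positivity)
lemma theta_sq {c : ℝ} (hc : 0 ≤ c) (q x : ℝ) : thetaAt c q x ^ 2 = x ^ 2 + c * q ^ 2 :=
  Real.sq_sqrt (by positivity)
lemma nAt_fst {c : ℝ} (hc : 0 ≤ c) (u : ℝ × ℝ) : |u.1| ≤ nAt c u := by
  rw [nAt, ← Real.sqrt_sq_eq_abs]
  exact Real.sqrt_le_sqrt (by nlinarith [sq_nonneg u.2])
lemma nAt_snd {c : ℝ} (hc : 0 ≤ c) (u : ℝ × ℝ) : Real.sqrt c * |u.2| ≤ nAt c u := by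
  have h : Real.sqrt c * |u.2| = Real.sqrt (c * u.2 ^ 2) := by
    rw [Real.sqrt_mul hc, Real.sqrt_sq_eq_abs]
  rw [nAt, h]
  exact Real.sqrt_le_sqrt (by nlinarith [sq_nonneg u.1])



set_option maxHeartbeats 1000000 in
theorem statement11
    (c q L D Q2 : ℝ) (hc : 0 < c) (hq : 0 < q) (hL : 0 < L) (hD : 0 < D) :
    IsOpen (B2 c q L D Q2) := by
  rw [isOpen_iff_mem_nhds]
  intro p hp
  have hsc : 0 < Real.sqrt c := Real.sqrt_pos.mpr hc
  set Mx : ℝ := |p.1| + 1 with hMxd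
  set M : ℝ := |p.2| + 1 with hMd
  have hMxpos : 0 < Mx := by positivity
  have hMpos : 0 < M := by positivity
  set Tm : ℝ := Real.sqrt (Mx ^ 2 + c * q ^ 2) with hTmd
  have hTmpos : 0 < Tm := Real.sqrt_pos.mpr (by positivity)
  set C : ℝ := D * Tm / Real.sqrt c with hCd
  have hCpos : 0 < C := by positivity
  have hCmul : Real.sqrt c * C = D * Tm := by
    rw [hCd]; field_simp
  set R : ℝ := (D * M / Real.sqrt c + C * Mx * M / (c * q ^ 2)) / L with hRd
  set n : ℕ := ⌈R⌉₊ with hnd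
  set m : ℕ := ⌈(C + n * |Q2|) / q⌉₊ with hmd
  set U : ℤ × ℤ → Set (ℝ × ℝ) := fun si =>
    {p' | si.2 ≠ 0 → D * q * |p'.2| / thetaAt c q p'.1 <
      nAt c
        (((si.1 : ℝ) * q + (si.2 : ℝ) * Q2) * p'.1 * p'.2 / (thetaAt c q p'.1) ^ 2 -
            (si.2 : ℝ) * L,
          ((si.1 : ℝ) * q + (si.2 : ℝ) * Q2) * q * p'.2 / (thetaAt c q p'.1) ^ 2)} with hUd
  have hθf : Continuous fun p' : ℝ × ℝ => thetaAt c q p'.1 ^ 2 :=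
    ((theta_cont c q).comp continuous_fst).pow 2
  have hθne : ∀ p' : ℝ × ℝ, thetaAt c q p'.1 ^ 2 ≠ 0 :=
    fun p' => pow_ne_zero 2 (theta_pos hc hq p'.1).ne'
  have hUopen : ∀ si, IsOpen (U si) := by
    intro si
    by_cases h : si.2 = 0
    · have : U si = Set.univ := by
        ext p'; simp [hUd, h]
      rw [this]; exact isOpen_univ
    · have heq : U si = {p' : ℝ × ℝ | D * q * |p'.2| / thetaAt c q p'.1 <
        nAt c
          (((si.1 : ℝ) * q + (si.2 : ℝ) * Q2) * p'.1 * p'.2 / (thetaAt c q p'.1) ^ 2 -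
              (si.2 : ℝ) * L,
            ((si.1 : ℝ) * q + (si.2 : ℝ) * Q2) * q * p'.2 / (thetaAt c q p'.1) ^ 2)} := by
        ext p'; simp [hUd, h]
      rw [heq]
      apply isOpen_lt
      · exact (continuous_const.mul continuous_snd.abs).div
          ((theta_cont c q).comp continuous_fst) (fun p' => (theta_pos hc hq p'.1).ne')
      · exact (nAt_cont c).comp
          (((((continuous_const.mul continuous_fst).mul continuous_snd).div hθf hθne).sub
              continuous_const).prodMk
            ((continuous_const.mul continuous_snd).div hθf hθne))
  set T : Finset (ℤ × ℤ) := Finset.Icc (-(m : ℤ)) m ×ˢ Finset.Icc (-(n : ℤ)) n with hTd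
  refine Filter.mem_of_superset
    (((Metric.isOpen_ball).inter (isOpen_biInter_finset fun si (_ : si ∈ T) => hUopen si)).mem_nhds
      ⟨Metric.mem_ball_self one_pos, Set.mem_iInter₂.mpr fun si _ hine => hp si.1 si.2 hine⟩) ?_
  rintro p' ⟨hball, hinter⟩
  intro s i hi
  rw [Metric.mem_ball, Prod.dist_eq] at hball
  have hd1 : dist p'.1 p.1 < 1 := lt_of_le_of_lt (le_max_left _ _) hball
  have hd2 : dist p'.2 p.2 < 1 := lt_of_le_of_lt (le_max_right _ _) hball
  rw [Real.dist_eq] at hd1 hd2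
  have hx : |p'.1| < Mx := by
    have h1 : |p'.1| ≤ |p'.1 - p.1| + |p.1| := by
      calc |p'.1| = |(p'.1 - p.1) + p.1| := by ring_nf
        _ ≤ _ := abs_add_le _ _
    rw [hMxd]; linarith
  have hy : |p'.2| < M := by
    have h1 : |p'.2| ≤ |p'.2 - p.2| + |p.2| := by
      calc |p'.2| = |(p'.2 - p.2) + p.2| := by ring_nf
        _ ≤ _ := abs_add_le _ _
    rw [hMd]; linarith
  set x : ℝ := p'.1 with hxd
  set y : ℝ := p'.2 with hyd
  set β : ℝ := (s : ℝ) * q + (i : ℝ) * Q2 with hβd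
  set θ : ℝ := thetaAt c q p'.1 with hθd
  have hθpos : 0 < θ := theta_pos hc hq _
  have hθsq : θ ^ 2 = x ^ 2 + c * q ^ 2 := theta_sq hc.le q _
  have hθle : θ ≤ Tm := by
    rw [hθd, hTmd, thetaAt]
    apply Real.sqrt_le_sqrt
    nlinarith [sq_abs p'.1, abs_nonneg p'.1]
  have hθge : Real.sqrt c * q ≤ θ := by
    have h1 : Real.sqrt (c * q ^ 2) ≤ θ := by
      rw [hθd, thetaAt]
      exact Real.sqrt_le_sqrt (by nlinarith [sq_nonneg p'.1])
    calc Real.sqrt c * q = Real.sqrt (c * q ^ 2) := by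
          rw [Real.sqrt_mul hc.le, Real.sqrt_sq hq.le]
      _ ≤ θ := h1
  have h1 : |β * x * y / θ ^ 2 - (i : ℝ) * L| ≤
      nAt c (β * x * y / θ ^ 2 - (i : ℝ) * L, β * q * y / θ ^ 2) :=
    nAt_fst hc.le (β * x * y / θ ^ 2 - (i : ℝ) * L, β * q * y / θ ^ 2)
  have h2 : Real.sqrt c * |β * q * y / θ ^ 2| ≤
      nAt c (β * x * y / θ ^ 2 - (i : ℝ) * L, β * q * y / θ ^ 2) :=
    nAt_snd hc.le (β * x * y / θ ^ 2 - (i : ℝ) * L, β * q * y / θ ^ 2)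
  by_cases hβC : C < |β|
  · by_cases hy0 : y = 0
    · have hL0 : D * q * |y| / θ = 0 := by rw [hy0]; simp
      have h1e : |β * x * y / θ ^ 2 - (i : ℝ) * L| = |(i : ℝ)| * L := by
        rw [hy0]; simp [abs_mul, abs_of_pos hL]
      have hone : (1 : ℝ) ≤ |(i : ℝ)| := by
        have := Int.one_le_abs hi
        exact_mod_cast this
      have hLle : L ≤ |(i : ℝ)| * L := le_mul_of_one_le_left hL.le hone
      rw [h1e] at h1
      rw [hL0]
      linarith
    · have hay : 0 < |y| := abs_pos.mpr hy0
      have habs : |β * q * y / θ ^ 2| = |β| * q * |y| / θ ^ 2 := by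
        rw [abs_div, abs_mul, abs_mul, abs_of_pos hq, abs_of_pos (pow_pos hθpos 2)]
      rw [habs] at h2
      have h3 : D * θ ≤ D * Tm := mul_le_mul_of_nonneg_left hθle hD.le
      have h4 : D * Tm < Real.sqrt c * |β| := by
        calc D * Tm = Real.sqrt c * C := hCmul.symm
          _ < Real.sqrt c * |β| := mul_lt_mul_of_pos_left hβC hsc
      have key : D * q * |y| / θ < Real.sqrt c * (|β| * q * |y| / θ ^ 2) := by
        have e1 : Real.sqrt c * (|β| * q * |y| / θ ^ 2) =
            Real.sqrt c * |β| * (q * |y|) / θ ^ 2 := by ring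
        have e2 : D * q * |y| / θ = D * θ * (q * |y|) / θ ^ 2 := by
          rw [pow_two]
          field_simp
        rw [e1, e2]
        apply (div_lt_div_iff_of_pos_right (pow_pos hθpos 2)).mpr
        exact mul_lt_mul_of_pos_right (lt_of_le_of_lt h3 h4) (mul_pos hq hay)
      exact lt_of_lt_of_le key h2
  · push_neg at hβC
    by_cases hi2 : |i| ≤ (n : ℤ)
    · have hscast : |(s : ℝ)| = ((|s| : ℤ) : ℝ) := by push_cast; ring
      have hicast : |(i : ℝ)| = ((|i| : ℤ) : ℝ) := by push_cast; ring
      have hiR : |(i : ℝ)| ≤ (n : ℝ) := by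
        rw [hicast]; exact_mod_cast hi2
      have hs : |s| ≤ (m : ℤ) := by
        have hb1 : |(s : ℝ)| * q ≤ C + (n : ℝ) * |Q2| := by
          have heq : (s : ℝ) * q = β - (i : ℝ) * Q2 := by rw [hβd]; ring
          calc |(s : ℝ)| * q = |(s : ℝ) * q| := by rw [abs_mul, abs_of_pos hq]
            _ = |β - (i : ℝ) * Q2| := by rw [heq]
            _ ≤ |β| + |(i : ℝ)| * |Q2| := by
                refine le_trans (abs_sub _ _) ?_
                rw [abs_mul]
            _ ≤ C + (n : ℝ) * |Q2| := by nlinarith [abs_nonneg Q2, abs_nonneg ((i : ℝ))]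
        have hb2 : |(s : ℝ)| ≤ (C + (n : ℝ) * |Q2|) / q := (le_div_iff₀ hq).mpr hb1
        have hb3 : (C + (n : ℝ) * |Q2|) / q ≤ (m : ℝ) := Nat.le_ceil _
        have := le_trans hb2 hb3
        rw [hscast] at this
        exact_mod_cast this
      have hmem : (s, i) ∈ T := by
        rw [hTd, Finset.mem_product, Finset.mem_Icc, Finset.mem_Icc]
        exact ⟨abs_le.mp hs, abs_le.mp hi2⟩
      exact Set.mem_iInter₂.mp hinter (s, i) hmem hi
    · push_neg at hi2
      have hicast : |(i : ℝ)| = ((|i| : ℤ) : ℝ) := by push_cast; ring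
      have hiR : R < |(i : ℝ)| := by
        have hr1 : R ≤ (n : ℝ) := Nat.le_ceil R
        have hr2 : (n : ℝ) < |(i : ℝ)| := by rw [hicast]; exact_mod_cast hi2
        linarith
      have habs1 : |β * x * y / θ ^ 2| ≤ C * Mx * M / (c * q ^ 2) := by
        rw [abs_div, abs_mul, abs_mul, abs_of_pos (pow_pos hθpos 2)]
        apply div_le_div₀ (by positivity) ?_ (by positivity) ?_
        · have t1 : |β| * |x| ≤ C * Mx :=
            mul_le_mul hβC hx.le (abs_nonneg x) hCpos.le
          exact mul_le_mul t1 hy.le (abs_nonneg y) (by positivity)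
        · rw [hθsq]; nlinarith [sq_nonneg x]
      have hil : |(i : ℝ) * L| = |(i : ℝ)| * L := by rw [abs_mul, abs_of_pos hL]
      have hlow : |(i : ℝ)| * L - C * Mx * M / (c * q ^ 2) ≤
          |β * x * y / θ ^ 2 - (i : ℝ) * L| := by
        have h3 := abs_sub_abs_le_abs_sub ((i : ℝ) * L) (β * x * y / θ ^ 2)
        rw [abs_sub_comm] at h3
        rw [hil] at h3
        linarith
      have hRL : R * L = D * M / Real.sqrt c + C * Mx * M / (c * q ^ 2) := by
        rw [hRd]; field_simp
      have h3 : D * M / Real.sqrt c < |(i : ℝ)| * L - C * Mx * M / (c * q ^ 2) := by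
        have := mul_lt_mul_of_pos_right hiR hL
        linarith
      have h4 : D * q * |y| / θ ≤ D * M / Real.sqrt c := by
        have t1 : D * q * |y| / θ ≤ D * q * M / (Real.sqrt c * q) :=
          div_le_div₀ (by positivity) (by nlinarith [mul_lt_mul_of_pos_left hy (mul_pos hD hq)]) (by positivity) hθge
        have t2 : D * q * M / (Real.sqrt c * q) = D * M / Real.sqrt c := by
          field_simp
        linarith [t1, t2.le, t2.ge]
      linarith
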